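/- Gradient flow structure of the extended Maxwell model (Theorem 3.1(i)): let (u, φ) : [0, T] → X × Ψ be continuously differentiable with u(t) ∈ g + V for all t, and suppose that for all t ∈ (0, T): (a) ⟪C(e u(t) − φ(t)), e v⟫_Ψ = ℓ(v) for all v ∈ V, and (b) η φ'(t) + α φ(t) − C(e u(t) − φ(t)) = 0 in Ψ. Then for every t ∈ (0, T) and every ψ ∈ Ψ, η⟪φ'(t), ψ⟫_Ψ = −(∂E_*)(φ(t))[ψ]. -/
import Mathlib


open scoped RealInnerProductSpace

/-- Gradient flow structure of the extended Maxwell model (Theorem 3.1(i)):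
for a C¹ solution `(u, φ)` of the weak formulation, `η⟪φ'(t), ψ⟫ = −(∂E_*)(φ(t))[ψ]`
for all `t ∈ (0, T)` and `ψ ∈ Ψ`. -/
theorem stmt_4
    {X Ψ : Type*}
    [NormedAddCommGroup X] [InnerProductSpace ℝ X] [CompleteSpace X]
    [NormedAddCommGroup Ψ] [InnerProductSpace ℝ Ψ] [CompleteSpace Ψ]
    (V : Submodule ℝ X) (hV : IsClosed (V : Set X))
    (e : X →L[ℝ] Ψ) (C : Ψ →L[ℝ] Ψ)
    (hCsym : ∀ φ ψ : Ψ, ⟪C φ, ψ⟫ = ⟪φ, C ψ⟫)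
    (cstar : ℝ) (hcstar : 0 < cstar)
    (hCcoer : ∀ ψ : Ψ, cstar * ‖ψ‖ ^ 2 ≤ ⟪C ψ, ψ⟫)
    (c₀ : ℝ) (hc₀ : 0 < c₀)
    (hacoer : ∀ v ∈ V, c₀ * ‖v‖ ^ 2 ≤ ⟪C (e v), e v⟫)
    (ℓ : X →L[ℝ] ℝ) (g : X) (η α : ℝ) (hη : 0 < η) (hα : 0 ≤ α)
    (E : X → Ψ → ℝ)
    (hE : ∀ u φ, E u φ =
      (1 / 2) * ⟪C (e u - φ), e u - φ⟫ + (α / 2) * ‖φ‖ ^ 2 - ℓ u)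
    (ubar : Ψ → X)
    (hubar_mem : ∀ φ : Ψ, ubar φ - g ∈ V)
    (hubar_weak : ∀ φ : Ψ, ∀ v ∈ V, ⟪C (e (ubar φ) - φ), e v⟫ = ℓ v)
    (hubar_min : ∀ φ : Ψ, ∀ v : X, v - g ∈ V → E (ubar φ) φ ≤ E v φ)
    (Estar : Ψ → ℝ)
    (hEstar : ∀ φ : Ψ, Estar φ = E (ubar φ) φ)
    (T : ℝ) (hT : 0 < T)
    (u : ℝ → X) (φ : ℝ → Ψ) (u' : ℝ → X) (φ' : ℝ → Ψ)
    (hu_deriv : ∀ t ∈ Set.Icc (0 : ℝ) T, HasDerivAt u (u' t) t)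
    (hφ_deriv : ∀ t ∈ Set.Icc (0 : ℝ) T, HasDerivAt φ (φ' t) t)
    (hu'_cont : ContinuousOn u' (Set.Icc (0 : ℝ) T))
    (hφ'_cont : ContinuousOn φ' (Set.Icc (0 : ℝ) T))
    (hu_mem : ∀ t ∈ Set.Icc (0 : ℝ) T, u t - g ∈ V)
    (heq1 : ∀ t ∈ Set.Ioo (0 : ℝ) T, ∀ v ∈ V, ⟪C (e (u t) - φ t), e v⟫ = ℓ v)
    (heq2 : ∀ t ∈ Set.Ioo (0 : ℝ) T,
      η • φ' t + α • φ t - C (e (u t) - φ t) = 0) :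
    ∀ t ∈ Set.Ioo (0 : ℝ) T, ∀ ψ : Ψ,
      HasDerivAt (fun ε : ℝ => Estar (φ t + ε • ψ)) (-(η * ⟪φ' t, ψ⟫)) 0 := by
  intro t ht ψ
  have htIcc : t ∈ Set.Icc (0:ℝ) T := ⟨ht.1.le, ht.2.le⟩
  set φ₀ : Ψ := φ t with hφ₀def
  -- quadratic expansion of the symmetric form
  have hCquad : ∀ a b : Ψ, ⟪C (a - b), a - b⟫ = ⟪C a, a⟫ - 2 * ⟪C a, b⟫ + ⟪C b, b⟫ := by
    intro a b
    have h1 : ⟪C b, a⟫ = ⟪C a, b⟫ := by rw [hCsym b a, real_inner_comm]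
    simp only [map_sub, inner_sub_left, inner_sub_right]
    rw [h1]; ring
  set Q : ℝ := (1/2) * ⟪C ψ, ψ⟫ + (α/2) * ‖ψ‖^2 with hQdef
  set G : X → ℝ := fun w => -⟪C (e w - φ₀), ψ⟫ + α * ⟪φ₀, ψ⟫ with hGdef
  have hexp : ∀ (w : X) (ε : ℝ),
      E w (φ₀ + ε • ψ) = E w φ₀ + ε * G w + ε^2 * Q := by
    intro w ε
    have h1 : e w - (φ₀ + ε • ψ) = (e w - φ₀) - ε • ψ := by abel
    rw [hE, hE, h1, hCquad, norm_add_sq_real]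
    simp only [hGdef, hQdef, map_smul, real_inner_smul_left, real_inner_smul_right,
      norm_smul, Real.norm_eq_abs, mul_pow, sq_abs]
    ring
  -- uniqueness of the minimizer: ubar φ₀ = u t
  have hsub : u t - ubar φ₀ ∈ V := by
    have h := sub_mem (hu_mem t htIcc) (hubar_mem φ₀)
    simpa [sub_sub_sub_cancel_right] using h
  have hu0 : u t = ubar φ₀ := by
    have h0 : ⟪C (e (u t) - φ₀) - C (e (ubar φ₀) - φ₀), e (u t - ubar φ₀)⟫ = 0 := by
      rw [inner_sub_left, heq1 t ht _ hsub, hubar_weak φ₀ _ hsub, sub_self]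
    have hc : C (e (u t) - φ₀) - C (e (ubar φ₀) - φ₀) = C (e (u t - ubar φ₀)) := by
      rw [map_sub e, ← map_sub C]; congr 1; abel
    rw [hc] at h0
    have hco := hacoer _ hsub
    rw [h0] at hco
    have : ‖u t - ubar φ₀‖ ^ 2 ≤ 0 := by nlinarith
    have hnz : ‖u t - ubar φ₀‖ = 0 := by nlinarith [norm_nonneg (u t - ubar φ₀)]
    have := norm_eq_zero.mp hnz
    exact sub_eq_zero.mp this
  -- the stress identity and the value of the derivative
  have hstress : C (e (u t) - φ₀) = η • φ' t + α • φ₀ := by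
    have h := heq2 t ht
    rw [sub_eq_zero] at h
    exact h.symm
  have hD : G (ubar φ₀) = -(η * ⟪φ' t, ψ⟫) := by
    simp only [hGdef]
    rw [← hu0, hstress, inner_add_left, real_inner_smul_left, real_inner_smul_left]
    ring
  -- coercivity bound on the minimizer difference
  set M : ℝ := ‖C‖ * ‖ψ‖ * ‖e‖ with hMdef
  have hM : 0 ≤ M := by positivity
  have hUdiff : ∀ ε : ℝ, ‖ubar (φ₀ + ε • ψ) - ubar φ₀‖ ≤ |ε| * M / c₀ := by
    intro ε
    set w := ubar (φ₀ + ε • ψ) - ubar φ₀ with hw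
    have hwV : w ∈ V := by
      have h := sub_mem (hubar_mem (φ₀ + ε • ψ)) (hubar_mem φ₀)
      simpa [hw, sub_sub_sub_cancel_right] using h
    have harg : (e (ubar (φ₀ + ε • ψ)) - (φ₀ + ε • ψ)) - (e (ubar φ₀) - φ₀)
        = e w - ε • ψ := by
      rw [hw, map_sub]; abel
    have h3 : C (e (ubar (φ₀ + ε • ψ)) - (φ₀ + ε • ψ)) - C (e (ubar φ₀) - φ₀)
        = C (e w) - ε • C ψ := by
      calc C (e (ubar (φ₀ + ε • ψ)) - (φ₀ + ε • ψ)) - C (e (ubar φ₀) - φ₀)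
          = C ((e (ubar (φ₀ + ε • ψ)) - (φ₀ + ε • ψ)) - (e (ubar φ₀) - φ₀)) :=
            (map_sub C _ _).symm
        _ = C (e w - ε • ψ) := by rw [harg]
        _ = C (e w) - ε • C ψ := by rw [map_sub, map_smul]
    have h4 : ⟪C (e w) - ε • C ψ, e w⟫ = 0 := by
      rw [← h3, inner_sub_left, hubar_weak (φ₀ + ε • ψ) _ hwV, hubar_weak φ₀ _ hwV, sub_self]
    have hkey : ⟪C (e w), e w⟫ = ε * ⟪C ψ, e w⟫ := by
      rw [inner_sub_left, real_inner_smul_left, sub_eq_zero] at h4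
      exact h4
    have hcs : ε * ⟪C ψ, e w⟫ ≤ |ε| * (M * ‖w‖) := by
      calc ε * ⟪C ψ, e w⟫ ≤ |ε * ⟪C ψ, e w⟫| := le_abs_self _
        _ = |ε| * |⟪C ψ, e w⟫| := abs_mul _ _
        _ ≤ |ε| * (‖C ψ‖ * ‖e w‖) := by
            gcongr
            exact abs_real_inner_le_norm _ _
        _ ≤ |ε| * (M * ‖w‖) := by
            apply mul_le_mul_of_nonneg_left _ (abs_nonneg ε)
            rw [hMdef]
            calc ‖C ψ‖ * ‖e w‖ ≤ (‖C‖ * ‖ψ‖) * (‖e‖ * ‖w‖) := by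
                  apply mul_le_mul (C.le_opNorm ψ) (e.le_opNorm w) (norm_nonneg _) (by positivity)
              _ = ‖C‖ * ‖ψ‖ * ‖e‖ * ‖w‖ := by ring
    have hcoerw := hacoer w hwV
    have h5 : c₀ * ‖w‖ ^ 2 ≤ (|ε| * M) * ‖w‖ := by
      rw [hkey] at hcoerw
      nlinarith
    rcases eq_or_lt_of_le (norm_nonneg w) with h0 | h0
    · rw [← h0]; positivity
    · have h6 : (c₀ * ‖w‖) * ‖w‖ ≤ (|ε| * M) * ‖w‖ := by
        rw [mul_assoc, ← pow_two]; exact h5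
      have h7 := le_of_mul_le_mul_right h6 h0
      rw [le_div_iff₀ hc₀]
      linarith
  -- Lipschitz bound on G along the minimizers
  set K₂ : ℝ := ‖C‖ * ‖e‖ * ‖ψ‖ * (M / c₀) with hK₂def
  have hK₂ : 0 ≤ K₂ := by positivity
  have hG : ∀ ε : ℝ, |G (ubar (φ₀ + ε • ψ)) - G (ubar φ₀)| ≤ |ε| * K₂ := by
    intro ε
    have hGdiff : G (ubar (φ₀ + ε • ψ)) - G (ubar φ₀)
        = -⟪C (e (ubar (φ₀ + ε • ψ) - ubar φ₀)), ψ⟫ := by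
      simp only [hGdef]
      have hcc : C (e (ubar (φ₀ + ε • ψ) - ubar φ₀))
          = C (e (ubar (φ₀ + ε • ψ)) - φ₀) - C (e (ubar φ₀) - φ₀) := by
        rw [map_sub e, ← map_sub C]; congr 1; abel
      rw [hcc, inner_sub_left]; ring
    rw [hGdiff, abs_neg]
    calc |⟪C (e (ubar (φ₀ + ε • ψ) - ubar φ₀)), ψ⟫|
        ≤ ‖C (e (ubar (φ₀ + ε • ψ) - ubar φ₀))‖ * ‖ψ‖ := abs_real_inner_le_norm _ _
      _ ≤ (‖C‖ * (‖e‖ * ‖ubar (φ₀ + ε • ψ) - ubar φ₀‖)) * ‖ψ‖ := by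
          apply mul_le_mul_of_nonneg_right _ (norm_nonneg ψ)
          calc ‖C (e (ubar (φ₀ + ε • ψ) - ubar φ₀))‖
              ≤ ‖C‖ * ‖e (ubar (φ₀ + ε • ψ) - ubar φ₀)‖ := C.le_opNorm _
            _ ≤ ‖C‖ * (‖e‖ * ‖ubar (φ₀ + ε • ψ) - ubar φ₀‖) := by
                apply mul_le_mul_of_nonneg_left (e.le_opNorm _) (norm_nonneg C)
      _ ≤ (‖C‖ * (‖e‖ * (|ε| * M / c₀))) * ‖ψ‖ := by
          apply mul_le_mul_of_nonneg_right _ (norm_nonneg ψ)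
          apply mul_le_mul_of_nonneg_left _ (norm_nonneg C)
          apply mul_le_mul_of_nonneg_left (hUdiff ε) (norm_nonneg e)
      _ = |ε| * K₂ := by rw [hK₂def]; ring
  -- sandwich bounds
  have hupper : ∀ ε : ℝ, Estar (φ₀ + ε • ψ) ≤ Estar φ₀ + ε * G (ubar φ₀) + ε^2 * Q := by
    intro ε
    rw [hEstar, hEstar, ← hexp]
    exact hubar_min _ _ (hubar_mem φ₀)
  have hlower : ∀ ε : ℝ, Estar φ₀ + ε * G (ubar (φ₀ + ε • ψ)) + ε^2 * Q
      ≤ Estar (φ₀ + ε • ψ) := by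
    intro ε
    have h1 : E (ubar φ₀) φ₀ ≤ E (ubar (φ₀ + ε • ψ)) φ₀ := hubar_min φ₀ _ (hubar_mem _)
    have h2 := hexp (ubar (φ₀ + ε • ψ)) ε
    rw [hEstar, hEstar, h2]
    linarith
  -- quadratic error bound
  have hbound : ∀ ε : ℝ,
      |Estar (φ₀ + ε • ψ) - Estar φ₀ - ε * G (ubar φ₀)| ≤ ε^2 * (|Q| + K₂) := by
    intro ε
    have h1 := hupper ε
    have h2 := hlower ε
    have h3 := hG ε
    have hsq : |ε| * |ε| = ε ^ 2 := by rw [← abs_mul, ← pow_two, abs_of_nonneg (sq_nonneg ε)]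
    have h4 : -(ε^2 * K₂) ≤ ε * (G (ubar (φ₀ + ε • ψ)) - G (ubar φ₀)) := by
      have habs : |ε * (G (ubar (φ₀ + ε • ψ)) - G (ubar φ₀))| ≤ ε^2 * K₂ := by
        rw [abs_mul]
        calc |ε| * |G (ubar (φ₀ + ε • ψ)) - G (ubar φ₀)| ≤ |ε| * (|ε| * K₂) :=
              mul_le_mul_of_nonneg_left h3 (abs_nonneg ε)
          _ = ε^2 * K₂ := by rw [← mul_assoc, hsq]
      linarith [neg_abs_le (ε * (G (ubar (φ₀ + ε • ψ)) - G (ubar φ₀)))]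
    have hq1 : ε^2 * Q ≤ ε^2 * |Q| := mul_le_mul_of_nonneg_left (le_abs_self Q) (sq_nonneg ε)
    have hq2 : -(ε^2 * |Q|) ≤ ε^2 * Q := by
      have := mul_le_mul_of_nonneg_left (neg_abs_le Q) (sq_nonneg ε)
      rw [mul_neg] at this
      linarith
    have hK2' : (0:ℝ) ≤ ε^2 * K₂ := by positivity
    have hring : ε * G (ubar (φ₀ + ε • ψ))
        = ε * G (ubar φ₀) + ε * (G (ubar (φ₀ + ε • ψ)) - G (ubar φ₀)) := by ring
    rw [abs_le]
    constructor
    · linarith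
    · linarith
  -- conclude
  rw [show -(η * ⟪φ' t, ψ⟫) = G (ubar φ₀) from hD.symm]
  rw [hasDerivAt_iff_isLittleO]
  have hlo : (fun ε : ℝ => ε ^ 2) =o[nhds 0] (fun ε : ℝ => ε - 0) := by
    have h := Asymptotics.isLittleO_pow_id (𝕜 := ℝ) (n := 2) (by norm_num)
    simp only [sub_zero]
    exact h
  apply Asymptotics.IsBigO.trans_isLittleO _ hlo
  rw [Asymptotics.isBigO_iff]
  refine ⟨|Q| + K₂, Filter.Eventually.of_forall fun ε => ?_⟩
  simp only [zero_smul, add_zero, sub_zero, smul_eq_mul, Real.norm_eq_abs]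
  rw [abs_of_nonneg (sq_nonneg ε)]
  calc |Estar (φ₀ + ε • ψ) - Estar φ₀ - ε * G (ubar φ₀)| ≤ ε^2 * (|Q| + K₂) := hbound ε
    _ = (|Q| + K₂) * ε^2 := by ring
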